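/- Let a = (a_0, a_1), b = (b_0, b_1), c = (c_0, c_1), d = (d_0, d_1) be vectors in ℂ² with c and d linearly independent, and let n ≥ 3. If a_0^{n−k} a_1^k + b_0^{n−k} b_1^k = c_0^{n−k} c_1^k + d_0^{n−k} d_1^k for all 0 ≤ k ≤ n, then there exist ω_0, ω_1 ∈ ℂ with ω_0^n = ω_1^n = 1 such that either (a = ω_0 c and b = ω_1 d) or (a = ω_0 d and b = ω_1 c). -/
import Mathlib

/-- If `λ·c^{⊗(m+1)} + μ·d^{⊗(m+1)} = 0` entrywise and `c, d` have nonzero cross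
product, then `λ = μ = 0`. -/
private lemma seqLI (m : ℕ) (c₀ c₁ d₀ d₁ L M : ℂ) (hdet : c₀*d₁ - c₁*d₀ ≠ 0)
    (h : ∀ j k : ℕ, j + k = m + 1 → L * (c₀^j*c₁^k) + M * (d₀^j*d₁^k) = 0) :
    L = 0 ∧ M = 0 := by
  have hc : ¬(c₀ = 0 ∧ c₁ = 0) := fun ⟨h1, h2⟩ => hdet (by rw [h1, h2]; ring)
  have hd : ¬(d₀ = 0 ∧ d₁ = 0) := fun ⟨h1, h2⟩ => hdet (by rw [h1, h2]; ring)
  have h1 : ∀ j k : ℕ, j + k = m → L * (c₀*d₁ - c₁*d₀) * (c₀^j*c₁^k) = 0 := by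
    intro j k hjk
    have e1 := h (j+1) k (by omega)
    have e2 := h j (k+1) (by omega)
    linear_combination d₁*e1 - d₀*e2
  have h2 : ∀ j k : ℕ, j + k = m → M * (c₀*d₁ - c₁*d₀) * (d₀^j*d₁^k) = 0 := by
    intro j k hjk
    have e1 := h (j+1) k (by omega)
    have e2 := h j (k+1) (by omega)
    linear_combination c₀*e2 - c₁*e1
  constructor
  · by_contra hL
    rcases not_and_or.mp hc with h0 | h0
    · have e := h1 m 0 (by omega)
      have hm : c₀^m * c₁^0 ≠ 0 := by simpa using pow_ne_zero m h0
      exact (mul_ne_zero (mul_ne_zero hL hdet) hm) e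
    · have e := h1 0 m (by omega)
      have hm : c₀^0 * c₁^m ≠ 0 := by simpa using pow_ne_zero m h0
      exact (mul_ne_zero (mul_ne_zero hL hdet) hm) e
  · by_contra hM
    rcases not_and_or.mp hd with h0 | h0
    · have e := h2 m 0 (by omega)
      have hm : d₀^m * d₁^0 ≠ 0 := by simpa using pow_ne_zero m h0
      exact (mul_ne_zero (mul_ne_zero hM hdet) hm) e
    · have e := h2 0 m (by omega)
      have hm : d₀^0 * d₁^m ≠ 0 := by simpa using pow_ne_zero m h0
      exact (mul_ne_zero (mul_ne_zero hM hdet) hm) e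

/-- Applying the second-order difference operator associated to linear forms `p, q`. -/
private lemma step (m : ℕ) (a₀ a₁ b₀ b₁ c₀ c₁ d₀ d₁ p₀ p₁ q₀ q₁ : ℂ)
    (h : ∀ j k : ℕ, j + k = m + 2 →
      a₀^j*a₁^k + b₀^j*b₁^k = c₀^j*c₁^k + d₀^j*d₁^k) :
    ∀ j k : ℕ, j + k = m →
      (p₁*a₀-p₀*a₁)*(q₁*a₀-q₀*a₁)*(a₀^j*a₁^k) + (p₁*b₀-p₀*b₁)*(q₁*b₀-q₀*b₁)*(b₀^j*b₁^k)
    = (p₁*c₀-p₀*c₁)*(q₁*c₀-q₀*c₁)*(c₀^j*c₁^k) + (p₁*d₀-p₀*d₁)*(q₁*d₀-q₀*d₁)*(d₀^j*d₁^k) := by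
  intro j k hjk
  have e1 := h (j+2) k (by omega)
  have e2 := h (j+1) (k+1) (by omega)
  have e3 := h j (k+2) (by omega)
  linear_combination p₁*q₁*e1 - (p₁*q₀+p₀*q₁)*e2 + p₀*q₀*e3

private lemma solve (c₀ c₁ a₀ a₁ : ℂ) (hc : ¬(c₀ = 0 ∧ c₁ = 0))
    (h : c₁*a₀ - c₀*a₁ = 0) : ∃ ω : ℂ, a₀ = ω*c₀ ∧ a₁ = ω*c₁ := by
  by_cases h0 : c₀ = 0
  · subst h0
    have h1 : c₁ ≠ 0 := fun h1 => hc ⟨rfl, h1⟩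
    have ha0 : a₀ = 0 := by
      rcases mul_eq_zero.mp (show c₁ * a₀ = 0 by linear_combination h) with h2 | h2
      · exact absurd h2 h1
      · exact h2
    exact ⟨a₁/c₁, by rw [ha0]; ring, by field_simp⟩
  · refine ⟨a₀/c₀, by field_simp, ?_⟩
    field_simp
    linear_combination -h

private lemma det_ne (c₀ c₁ d₀ d₁ : ℂ)
    (hcd : LinearIndependent ℂ ![(c₀, c₁), (d₀, d₁)]) : c₀*d₁ - c₁*d₀ ≠ 0 := by
  rw [LinearIndependent.pair_iff] at hcd
  intro hdet
  by_cases h : d₀ = 0 ∧ c₀ = 0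
  · by_cases h' : d₁ = 0 ∧ c₁ = 0
    · have := hcd 1 0 (by simp [Prod.ext_iff, h.2, h'.2])
      simpa using this.1
    · have := hcd d₁ (-c₁) (by
        simp only [Prod.smul_mk, smul_eq_mul, Prod.mk_add_mk, Prod.ext_iff, Prod.fst_zero,
          Prod.snd_zero]
        refine ⟨by rw [h.1, h.2]; ring, by ring⟩)
      exact h' ⟨this.1, neg_eq_zero.mp this.2⟩
  · have := hcd d₀ (-c₀) (by
      simp only [Prod.smul_mk, smul_eq_mul, Prod.mk_add_mk, Prod.ext_iff, Prod.fst_zero,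
        Prod.snd_zero]
      constructor
      · ring
      · linear_combination -hdet)
    exact h ⟨this.1, neg_eq_zero.mp this.2⟩

/-- **Uniqueness of the decomposition into a sum of two tensor powers.**
Let `a = (a₀, a₁)`, `b = (b₀, b₁)`, `c = (c₀, c₁)`, `d = (d₀, d₁)` be vectors in `ℂ²`
with `c, d` linearly independent, and let `n ≥ 3`. If
`a₀^(n-k) a₁^k + b₀^(n-k) b₁^k = c₀^(n-k) c₁^k + d₀^(n-k) d₁^k` for all `k ≤ n`, then
there exist `n`-th roots of unity `ω₀, ω₁` such that either `a = ω₀ • c` and `b = ω₁ • d`,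
or `a = ω₀ • d` and `b = ω₁ • c`. -/
theorem stmt_4 (n : ℕ) (hn : 3 ≤ n) (a₀ a₁ b₀ b₁ c₀ c₁ d₀ d₁ : ℂ)
    (hcd : LinearIndependent ℂ ![(c₀, c₁), (d₀, d₁)])
    (h : ∀ k ≤ n, a₀ ^ (n - k) * a₁ ^ k + b₀ ^ (n - k) * b₁ ^ k
        = c₀ ^ (n - k) * c₁ ^ k + d₀ ^ (n - k) * d₁ ^ k) :
    ∃ ω₀ ω₁ : ℂ, ω₀ ^ n = 1 ∧ ω₁ ^ n = 1 ∧
      (((a₀, a₁) = ω₀ • (c₀, c₁) ∧ (b₀, b₁) = ω₁ • (d₀, d₁)) ∨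
        ((a₀, a₁) = ω₀ • (d₀, d₁) ∧ (b₀, b₁) = ω₁ • (c₀, c₁))) := by
  have hdet := det_ne c₀ c₁ d₀ d₁ hcd
  obtain ⟨m, rfl⟩ : ∃ m, n = m + 3 := ⟨n - 3, by omega⟩
  have h' : ∀ j k : ℕ, j + k = m + 3 →
      a₀^j*a₁^k + b₀^j*b₁^k = c₀^j*c₁^k + d₀^j*d₁^k := by
    intro j k hjk
    have := h k (by omega)
    rwa [show m + 3 - k = j by omega] at this
  have hc_ne : ¬(c₀ = 0 ∧ c₁ = 0) := fun ⟨h1, h2⟩ => hdet (by rw [h1, h2]; ring)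
  have hd_ne : ¬(d₀ = 0 ∧ d₁ = 0) := fun ⟨h1, h2⟩ => hdet (by rw [h1, h2]; ring)
  by_cases hab : a₀*b₁ - a₁*b₀ = 0
  · exfalso
    by_cases ha : a₀ = 0 ∧ a₁ = 0
    · obtain ⟨rfl, rfl⟩ := ha
      by_cases hb : b₀ = 0 ∧ b₁ = 0
      · obtain ⟨rfl, rfl⟩ := hb
        have key : ∀ j k : ℕ, j + k = (m + 2) + 1 →
            (1:ℂ) * (c₀^j*c₁^k) + 1 * (d₀^j*d₁^k) = 0 := by
          intro j k hjk
          have e := h' j k (by omega)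
          have hz : (0:ℂ)^j * (0:ℂ)^k = 0 := by
            rcases (by omega : j ≠ 0 ∨ k ≠ 0) with hj | hk
            · rw [zero_pow hj]; ring
            · rw [zero_pow hk]; ring
          linear_combination 2*hz - e
        exact one_ne_zero ((seqLI (m+2) c₀ c₁ d₀ d₁ 1 1 hdet key).1)
      · have key : ∀ j k : ℕ, j + k = m + 1 →
            ((b₁*c₀-b₀*c₁)*(b₁*c₀-b₀*c₁)) * (c₀^j*c₁^k)
              + ((b₁*d₀-b₀*d₁)*(b₁*d₀-b₀*d₁)) * (d₀^j*d₁^k) = 0 := by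
          intro j k hjk
          have S := step (m+1) 0 0 b₀ b₁ c₀ c₁ d₀ d₁ b₀ b₁ b₀ b₁
            (fun j k hjk => h' j k (by omega)) j k (by omega)
          linear_combination -S
        obtain ⟨hC, hD⟩ := seqLI m c₀ c₁ d₀ d₁ _ _ hdet key
        have hC' : b₁*c₀ - b₀*c₁ = 0 := by
          have := mul_self_eq_zero.mp hC; exact this
        have hD' : b₁*d₀ - b₀*d₁ = 0 := mul_self_eq_zero.mp hD
        rcases not_and_or.mp hb with h0 | h0
        · apply h0
          have hz : b₀ * (c₀*d₁ - c₁*d₀) = 0 := by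
            linear_combination d₀*hC' - c₀*hD'
          rcases mul_eq_zero.mp hz with h1 | h1
          · exact h1
          · exact absurd h1 hdet
        · apply h0
          have hz : b₁ * (c₀*d₁ - c₁*d₀) = 0 := by
            linear_combination d₁*hC' - c₁*hD'
          rcases mul_eq_zero.mp hz with h1 | h1
          · exact h1
          · exact absurd h1 hdet
    · have key : ∀ j k : ℕ, j + k = m + 1 →
          ((a₁*c₀-a₀*c₁)*(a₁*c₀-a₀*c₁)) * (c₀^j*c₁^k)
            + ((a₁*d₀-a₀*d₁)*(a₁*d₀-a₀*d₁)) * (d₀^j*d₁^k) = 0 := by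
        intro j k hjk
        have S := step (m+1) a₀ a₁ b₀ b₁ c₀ c₁ d₀ d₁ a₀ a₁ a₀ a₁
          (fun j k hjk => h' j k (by omega)) j k (by omega)
        linear_combination -S - (a₁*b₀-a₀*b₁)*(b₀^j*b₁^k)*hab
      obtain ⟨hC, hD⟩ := seqLI m c₀ c₁ d₀ d₁ _ _ hdet key
      have hC' : a₁*c₀ - a₀*c₁ = 0 := mul_self_eq_zero.mp hC
      have hD' : a₁*d₀ - a₀*d₁ = 0 := mul_self_eq_zero.mp hD
      rcases not_and_or.mp ha with h0 | h0
      · apply h0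
        have hz : a₀ * (c₀*d₁ - c₁*d₀) = 0 := by
          linear_combination d₀*hC' - c₀*hD'
        rcases mul_eq_zero.mp hz with h1 | h1
        · exact h1
        · exact absurd h1 hdet
      · apply h0
        have hz : a₁ * (c₀*d₁ - c₁*d₀) = 0 := by
          linear_combination d₁*hC' - c₁*hD'
        rcases mul_eq_zero.mp hz with h1 | h1
        · exact h1
        · exact absurd h1 hdet
  · -- main case : a, b independent
    have key : ∀ j k : ℕ, j + k = m + 1 →
        ((c₁*a₀-c₀*a₁)*(d₁*a₀-d₀*a₁)) * (a₀^j*a₁^k)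
          + ((c₁*b₀-c₀*b₁)*(d₁*b₀-d₀*b₁)) * (b₀^j*b₁^k) = 0 := by
      intro j k hjk
      have S := step (m+1) a₀ a₁ b₀ b₁ c₀ c₁ d₀ d₁ c₀ c₁ d₀ d₁
        (fun j k hjk => h' j k (by omega)) j k (by omega)
      linear_combination S
    obtain ⟨hA, hB⟩ := seqLI m a₀ a₁ b₀ b₁ _ _ hab key
    rcases mul_eq_zero.mp hA with hac | had <;> rcases mul_eq_zero.mp hB with hbc | hbd
    · exfalso; apply hab
      rcases not_and_or.mp hc_ne with h0 | h0
      · have hz : c₀ * (a₀*b₁ - a₁*b₀) = 0 := by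
          linear_combination b₀*hac - a₀*hbc
        rcases mul_eq_zero.mp hz with h1 | h1
        · exact absurd h1 h0
        · exact h1
      · have hz : c₁ * (a₀*b₁ - a₁*b₀) = 0 := by
          linear_combination b₁*hac - a₁*hbc
        rcases mul_eq_zero.mp hz with h1 | h1
        · exact absurd h1 h0
        · exact h1
    · -- a ∥ c, b ∥ d
      obtain ⟨ω₀, rfl, rfl⟩ := solve c₀ c₁ a₀ a₁ hc_ne hac
      obtain ⟨ω₁, rfl, rfl⟩ := solve d₀ d₁ b₀ b₁ hd_ne hbd
      have key3 : ∀ j k : ℕ, j + k = (m + 2) + 1 →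
          (ω₀^(m+3)-1) * (c₀^j*c₁^k) + (ω₁^(m+3)-1) * (d₀^j*d₁^k) = 0 := by
        intro j k hjk
        have e := h' j k (by omega)
        have p0 : ω₀^(m+3) = ω₀^j*ω₀^k := by
          rw [← pow_add, show j + k = m + 3 from by omega]
        have p1 : ω₁^(m+3) = ω₁^j*ω₁^k := by
          rw [← pow_add, show j + k = m + 3 from by omega]
        linear_combination e + (c₀^j*c₁^k)*p0 + (d₀^j*d₁^k)*p1
      obtain ⟨h0, h1⟩ := seqLI (m+2) c₀ c₁ d₀ d₁ _ _ hdet key3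
      exact ⟨ω₀, ω₁, by linear_combination h0, by linear_combination h1,
        Or.inl ⟨by simp [Prod.smul_mk, smul_eq_mul], by simp [Prod.smul_mk, smul_eq_mul]⟩⟩
    · -- a ∥ d, b ∥ c
      obtain ⟨ω₀, rfl, rfl⟩ := solve d₀ d₁ a₀ a₁ hd_ne had
      obtain ⟨ω₁, rfl, rfl⟩ := solve c₀ c₁ b₀ b₁ hc_ne hbc
      have key3 : ∀ j k : ℕ, j + k = (m + 2) + 1 →
          (ω₁^(m+3)-1) * (c₀^j*c₁^k) + (ω₀^(m+3)-1) * (d₀^j*d₁^k) = 0 := by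
        intro j k hjk
        have e := h' j k (by omega)
        have p0 : ω₀^(m+3) = ω₀^j*ω₀^k := by
          rw [← pow_add, show j + k = m + 3 from by omega]
        have p1 : ω₁^(m+3) = ω₁^j*ω₁^k := by
          rw [← pow_add, show j + k = m + 3 from by omega]
        linear_combination e + (c₀^j*c₁^k)*p1 + (d₀^j*d₁^k)*p0
      obtain ⟨h1, h0⟩ := seqLI (m+2) c₀ c₁ d₀ d₁ _ _ hdet key3
      exact ⟨ω₀, ω₁, by linear_combination h0, by linear_combination h1,
        Or.inr ⟨by simp [Prod.smul_mk, smul_eq_mul], by simp [Prod.smul_mk, smul_eq_mul]⟩⟩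
    · exfalso; apply hab
      rcases not_and_or.mp hd_ne with h0 | h0
      · have hz : d₀ * (a₀*b₁ - a₁*b₀) = 0 := by
          linear_combination b₀*had - a₀*hbd
        rcases mul_eq_zero.mp hz with h1 | h1
        · exact absurd h1 h0
        · exact h1
      · have hz : d₁ * (a₀*b₁ - a₁*b₀) = 0 := by
          linear_combination b₁*had - a₁*hbd
        rcases mul_eq_zero.mp hz with h1 | h1
        · exact absurd h1 h0
        · exact h1
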